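/- Let 0 ≤ r < n and let w = (w[1]···w[a^n]) be an (a,n,n+r)-perfect necklace, where each block w[p] has length n+r. For every q ≥ 1, the cyclic word v = (v[1]···v[a^n]) is an (a,n,nq+r)-perfect necklace, where v[p] is the concatenation of q copies of the first n characters of w[p] followed by the last r characters of w[p]. -/

import Mathlib

/-- `v`, viewed as a cyclic word of length `t * a ^ n` (a periodic function `ℕ → Fin a`),
is an `(a, n, t)`-perfect necklace. -/
def IsPerfectNecklace (a n t : ℕ) (v : ℕ → Fin a) : Prop :=
  (∀ i, v (i + t * a ^ n) = v i) ∧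
  ∀ j : Fin t, ∀ w : Fin n → Fin a,
    ∃! i : Fin (t * a ^ n), (i : ℕ) % t = (j : ℕ) ∧
      ∀ m : Fin n, v ((i : ℕ) + (m : ℕ)) = w m

private theorem existsUnique_block {L N j : ℕ} (hL : 0 < L) (hj : j < L)
    (P : ℕ → Prop) :
    (∃! i : Fin (L * N), (i : ℕ) % L = j ∧ P (i : ℕ)) ↔
      ∃! p : Fin N, P ((p : ℕ) * L + j) := by
  have hlt : ∀ p : Fin N, (p : ℕ) * L + j < L * N := by
    intro p
    calc (p : ℕ) * L + j < ((p : ℕ) + 1) * L := by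
          have : ((p : ℕ) + 1) * L = (p : ℕ) * L + L := by ring
          omega
      _ ≤ N * L := Nat.mul_le_mul_right L p.isLt
      _ = L * N := Nat.mul_comm _ _
  have hmod : ∀ p : Fin N, ((p : ℕ) * L + j) % L = j := by
    intro p
    rw [Nat.add_comm, Nat.add_mul_mod_self_right]
    exact Nat.mod_eq_of_lt hj
  have hdiv : ∀ p : Fin N, ((p : ℕ) * L + j) / L = (p : ℕ) := by
    intro p
    rw [Nat.add_comm, Nat.add_mul_div_right j _ hL, Nat.div_eq_of_lt hj, Nat.zero_add]
  constructor
  · rintro ⟨i, ⟨him, hiP⟩, huniq⟩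
    have hiN : (i : ℕ) / L < N := Nat.div_lt_of_lt_mul i.isLt
    have hdec : (i : ℕ) / L * L + j = (i : ℕ) := by
      rw [Nat.mul_comm ((i : ℕ) / L) L, ← him]
      exact Nat.div_add_mod _ _
    refine ⟨⟨(i : ℕ) / L, hiN⟩, ?_, ?_⟩
    · show P ((i : ℕ) / L * L + j)
      rw [hdec]; exact hiP
    · rintro p hp
      have h2 : (⟨(p : ℕ) * L + j, hlt p⟩ : Fin (L * N)) = i :=
        huniq ⟨(p : ℕ) * L + j, hlt p⟩ ⟨hmod p, hp⟩
      have h3 : (p : ℕ) * L + j = (i : ℕ) := congrArg Fin.val h2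
      apply Fin.ext
      show (p : ℕ) = (i : ℕ) / L
      rw [← h3, hdiv p]
  · rintro ⟨p, hp, huniq⟩
    refine ⟨⟨(p : ℕ) * L + j, hlt p⟩, ⟨hmod p, hp⟩, ?_⟩
    rintro i ⟨him, hiP⟩
    have hiN : (i : ℕ) / L < N := Nat.div_lt_of_lt_mul i.isLt
    have hdec : (i : ℕ) / L * L + j = (i : ℕ) := by
      rw [Nat.mul_comm ((i : ℕ) / L) L, ← him]
      exact Nat.div_add_mod _ _
    have h4 : (⟨(i : ℕ) / L, hiN⟩ : Fin N) = p := by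
      apply huniq
      show P ((i : ℕ) / L * L + j)
      rw [hdec]; exact hiP
    apply Fin.ext
    show (i : ℕ) = (p : ℕ) * L + j
    rw [← congrArg Fin.val h4, hdec]

/-- Given an `(a, n, n+r)`-perfect necklace `w` with blocks `w[p]` of length `n + r`
(so `w[p]_j = w (p * (n+r) + j)`), for every `q ≥ 1` the cyclic word whose `p`-th block
is `q` copies of the first `n` characters of `w[p]` followed by the last `r` characters
of `w[p]` is an `(a, n, n*q + r)`-perfect necklace. -/
theorem blocks_repeat_isPerfectNecklace (a n r q : ℕ) (ha : 0 < a) (hr : r < n)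
    (hq : 1 ≤ q) (w : ℕ → Fin a) (hw : IsPerfectNecklace a n (n + r) w) :
    IsPerfectNecklace a n (n * q + r) (fun i =>
      let L := n * q + r
      let i' := i % (L * a ^ n)
      let p := i' / L
      let j := i' % L
      if j < n * q then w (p * (n + r) + j % n) else w (p * (n + r) + n + (j - n * q))) := by
  have hn : 0 < n := by omega
  have hNpos : 0 < a ^ n := Nat.pow_pos ha
  have hnq : n ≤ n * q := Nat.le_mul_of_pos_right n (by omega)
  have hL : 0 < n * q + r := by omega
  set F : ℕ → Fin a := (fun i =>
      let L := n * q + r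
      let i' := i % (L * a ^ n)
      let p := i' / L
      let j := i' % L
      if j < n * q then w (p * (n + r) + j % n) else w (p * (n + r) + n + (j - n * q)))
    with hF
  have hFif : ∀ x : ℕ, F x =
      if x % ((n * q + r) * a ^ n) % (n * q + r) < n * q
      then w (x % ((n * q + r) * a ^ n) / (n * q + r) * (n + r)
        + x % ((n * q + r) * a ^ n) % (n * q + r) % n)
      else w (x % ((n * q + r) * a ^ n) / (n * q + r) * (n + r) + n
        + (x % ((n * q + r) * a ^ n) % (n * q + r) - n * q)) := fun x => rfl
  have hFper : ∀ x, F (x + (n * q + r) * a ^ n) = F x := by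
    intro x
    rw [hFif, hFif, Nat.add_mod_right]
  have hFeval : ∀ p j : ℕ, p < a ^ n → j < n * q + r →
      F (p * (n * q + r) + j) =
        if j < n * q then w (p * (n + r) + j % n)
        else w (p * (n + r) + n + (j - n * q)) := by
    intro p j hp hj
    have hlt : p * (n * q + r) + j < (n * q + r) * a ^ n := by
      calc p * (n * q + r) + j < (p + 1) * (n * q + r) := by
            have : (p + 1) * (n * q + r) = p * (n * q + r) + (n * q + r) := by ring
            omega
        _ ≤ a ^ n * (n * q + r) := Nat.mul_le_mul_right _ hp
        _ = (n * q + r) * a ^ n := Nat.mul_comm _ _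
    have hdiv : (p * (n * q + r) + j) / (n * q + r) = p := by
      rw [Nat.add_comm, Nat.add_mul_div_right j _ hL, Nat.div_eq_of_lt hj, Nat.zero_add]
    have hmod : (p * (n * q + r) + j) % (n * q + r) = j := by
      rw [Nat.add_comm, Nat.add_mul_mod_self_right]
      exact Nat.mod_eq_of_lt hj
    rw [hFif, Nat.mod_eq_of_lt hlt, hdiv, hmod]
  -- window formula, case A (window inside the repeated part)
  have hFwinA : ∀ p j m : ℕ, p < a ^ n → j + n ≤ n * q → m < n →
      F (p * (n * q + r) + j + m) = w (p * (n + r) + (j + m) % n) := by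
    intro p j m hp hjn hm
    have h1 : j + m < n * q := by omega
    rw [Nat.add_assoc, hFeval p (j + m) hp (by omega), if_pos h1]
  -- window formula, case B (window meets the tail; may cross block boundary)
  have hFwinB : ∀ p j m o : ℕ, p < a ^ n → j < n * q + r → j + n = n * q + o → m < n →
      F (p * (n * q + r) + j + m) = w (p * (n + r) + o + m) := by
    intro p j m o hp hj ho hm
    by_cases hcross : j + m < n * q + r
    · rw [Nat.add_assoc, hFeval p (j + m) hp hcross]
      by_cases h1 : j + m < n * q
      · rw [if_pos h1]
        obtain ⟨k, hk⟩ : ∃ k, q = k + 1 := ⟨q - 1, by omega⟩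
        have hnk : n * q = n * k + n := by rw [hk]; ring
        have h2 : j + m = (o + m) + k * n := by
          have : k * n = n * k := Nat.mul_comm _ _
          omega
        have h3 : (j + m) % n = o + m := by
          rw [h2, Nat.add_mul_mod_self_right]
          exact Nat.mod_eq_of_lt (by omega)
        rw [h3, ← Nat.add_assoc]
      · rw [if_neg h1]
        congr 1
        omega
    · obtain ⟨c, hc1, hc2⟩ : ∃ c, j + m = (n * q + r) + c ∧ c < n := ⟨j + m - (n * q + r), by omega, by omega⟩
      have heq : p * (n * q + r) + j + m = (p + 1) * (n * q + r) + c := by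
        have : (p + 1) * (n * q + r) = p * (n * q + r) + (n * q + r) := by ring
        omega
      rw [heq]
      by_cases hpN : p + 1 < a ^ n
      · rw [hFeval (p + 1) c hpN (by omega), if_pos (by omega : c < n * q),
          Nat.mod_eq_of_lt hc2]
        congr 1
        have hex : (p + 1) * (n + r) = p * (n + r) + (n + r) := by ring
        omega
      · have hpN' : p + 1 = a ^ n := by omega
        have h5 : (p + 1) * (n * q + r) + c = c + (n * q + r) * a ^ n := by
          rw [← hpN']; ring
        rw [h5, hFper c]
        have h6 : F c = w (0 * (n + r) + c % n) := by
          have h7 := hFeval 0 c hNpos (by omega)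
          rw [Nat.zero_mul, Nat.zero_add] at h7
          rw [h7, if_pos (by omega : c < n * q)]
        rw [h6, Nat.zero_mul, Nat.zero_add, Nat.mod_eq_of_lt hc2, ← hw.1 c]
        congr 1
        have hex : (n + r) * a ^ n = p * (n + r) + (n + r) := by
          rw [← hpN']; ring
        omega
  clear hF
  constructor
  · exact hFper
  · intro j u
    rw [existsUnique_block hL j.isLt (fun x => ∀ m : Fin n, F (x + (m : ℕ)) = u m)]
    by_cases hA : (j : ℕ) + n ≤ n * q
    · -- case A: use w's class 0 and a rotated word
      haveI : NeZero n := ⟨by omega⟩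
      set c : Fin n := ⟨(j : ℕ) % n, Nat.mod_lt _ hn⟩ with hc
      set σ : Fin n ≃ Fin n := Equiv.addLeft c with hσdef
      set u' : Fin n → Fin a := fun k => u (σ.symm k) with hu'
      have hσ : ∀ m : Fin n, ((σ m : Fin n) : ℕ) = ((j : ℕ) + (m : ℕ)) % n := by
        intro m
        show ((c + m : Fin n) : ℕ) = _
        rw [Fin.val_add]
        conv_rhs => rw [Nat.add_mod]
        rw [hc, Nat.mod_eq_of_lt m.isLt]
      have hwin : ∀ p : Fin (a ^ n),
          (∀ m : Fin n, F ((p : ℕ) * (n * q + r) + (j : ℕ) + (m : ℕ)) = u m) ↔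
          (∀ m : Fin n, w ((p : ℕ) * (n + r) + 0 + (m : ℕ)) = u' m) := by
        intro p
        constructor
        · intro h k
          have h1 := h (σ.symm k)
          rw [hFwinA p j (σ.symm k) p.isLt hA (σ.symm k).isLt] at h1
          have h2 : ((j : ℕ) + ((σ.symm k : Fin n) : ℕ)) % n = (k : ℕ) := by
            have h3 := hσ (σ.symm k)
            rw [Equiv.apply_symm_apply] at h3
            exact h3.symm
          rw [h2] at h1
          show w _ = u (σ.symm k)
          rw [Nat.add_zero]
          exact h1
        · intro h m
          rw [hFwinA p j m p.isLt hA m.isLt]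
          have h1 := h (σ m)
          rw [hσ m] at h1
          rw [hu'] at h1
          simp only [Equiv.symm_apply_apply] at h1
          rw [Nat.add_zero] at h1
          exact h1
      rw [existsUnique_congr hwin]
      have h0T : (0 : ℕ) < n + r := by omega
      have hwu := hw.2 ⟨0, h0T⟩ u'
      exact (existsUnique_block h0T h0T (fun x => ∀ m : Fin n, w (x + (m : ℕ)) = u' m)).mp hwu
    · -- case B
      obtain ⟨o, ho⟩ : ∃ o, (j : ℕ) + n = n * q + o := ⟨(j : ℕ) + n - n * q, by omega⟩
      have hoT : o < n + r := by
        have := j.isLt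
        omega
      have hwin : ∀ p : Fin (a ^ n),
          (∀ m : Fin n, F ((p : ℕ) * (n * q + r) + (j : ℕ) + (m : ℕ)) = u m) ↔
          (∀ m : Fin n, w ((p : ℕ) * (n + r) + o + (m : ℕ)) = u m) := by
        intro p
        refine forall_congr' fun m => ?_
        rw [hFwinB p j m o p.isLt j.isLt ho m.isLt]
      rw [existsUnique_congr hwin]
      have hwu := hw.2 ⟨o, hoT⟩ u
      exact (existsUnique_block (by omega : 0 < n + r) hoT
        (fun x => ∀ m : Fin n, w (x + (m : ℕ)) = u m)).mp hwu
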